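/- Let ρ > 0 and v ∈ ℝ, write a point of ℝ⁴ as (t, x, y, z) and s = t² + x² + y² + z² + ρ², and let A₀, A₁, A₂, A₃ : ℝ⁴ → M₂(ℂ) be the one-instanton configuration A₀ = (1/s)·[[−z, −x+iy],[−x−iy, z]], A₁ = (1/s)·[[y, t+iz],[t−iz, −y]], A₂ = (1/s)·[[−x, −it+z],[it+z, x]], A₃ = (1/s)·[[t, −ix−y],[ix−y, −t]]. Define H : ℝ⁴ → M₂(ℂ) by H = (v/s)·[[(t+iz)² − (x−iy)², 2i(tx − yz)],[2i(tx − yz), (t−iz)² − (x+iy)²]] and the covariant derivative D_μ H = ∂_μ H − i A_μ H − i H A_μᵀ. Then ∑_{μ=0}^{3} D_μ (D_μ H) = 0 identically on ℝ⁴, where D_μ acts on each D_ν H by the same formula D_μ K = ∂_μ K − i A_μ K − i K A_μᵀ. -/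

import Mathlib

open Matrix

/-- The partial derivative `∂_μ` of a matrix-valued function on `ℝ⁴`, taken entrywise. -/
noncomputable def pderiv {m : Type*} (μ : Fin 4)
    (A : (Fin 4 → ℝ) → Matrix m m ℂ) (p : Fin 4 → ℝ) : Matrix m m ℂ :=
  Matrix.of fun i j => fderiv ℝ (fun q => A q i j) p (Pi.single μ 1)

/-- The covariant derivative `D_μ K = ∂_μ K − i A_μ K − i K A_μᵀ` of a field `K` in the
rank-two symmetric tensor representation. -/
noncomputable def Dcov {m : Type*} [Fintype m]
    (A : Fin 4 → (Fin 4 → ℝ) → Matrix m m ℂ) (μ : Fin 4)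
    (K : (Fin 4 → ℝ) → Matrix m m ℂ) : (Fin 4 → ℝ) → Matrix m m ℂ :=
  fun p => pderiv μ K p - Complex.I • (A μ p * K p) - Complex.I • (K p * (A μ p)ᵀ)

/-- `s = t² + x² + y² + z² + ρ²` for `(t,x,y,z) ∈ ℝ⁴`. -/
def sdenom (ρ : ℝ) (p : Fin 4 → ℝ) : ℝ :=
  p 0 ^ 2 + p 1 ^ 2 + p 2 ^ 2 + p 3 ^ 2 + ρ ^ 2

/-- The BPST one-instanton configuration of size `ρ`, with `(t,x,y,z) = (p 0, p 1, p 2, p 3)`. -/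
noncomputable def bpst (ρ : ℝ) : Fin 4 → (Fin 4 → ℝ) → Matrix (Fin 2) (Fin 2) ℂ :=
  ![fun p => ((sdenom ρ p : ℂ))⁻¹ •
      !![-(p 3 : ℂ), -(p 1 : ℂ) + (p 2 : ℂ) * Complex.I;
         -(p 1 : ℂ) - (p 2 : ℂ) * Complex.I, (p 3 : ℂ)],
    fun p => ((sdenom ρ p : ℂ))⁻¹ •
      !![(p 2 : ℂ), (p 0 : ℂ) + (p 3 : ℂ) * Complex.I;
         (p 0 : ℂ) - (p 3 : ℂ) * Complex.I, -(p 2 : ℂ)],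
    fun p => ((sdenom ρ p : ℂ))⁻¹ •
      !![-(p 1 : ℂ), -(p 0 : ℂ) * Complex.I + (p 3 : ℂ);
         (p 0 : ℂ) * Complex.I + (p 3 : ℂ), (p 1 : ℂ)],
    fun p => ((sdenom ρ p : ℂ))⁻¹ •
      !![(p 0 : ℂ), -(p 1 : ℂ) * Complex.I - (p 2 : ℂ);
         (p 1 : ℂ) * Complex.I - (p 2 : ℂ), -(p 0 : ℂ)]]

/-- The Higgs field configuration in the rank-two symmetric tensor representation of `SU(2)`
under the BPST one-instanton background, with `(t,x,y,z) = (p 0, p 1, p 2, p 3)`. -/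
noncomputable def higgs (ρ v : ℝ) (p : Fin 4 → ℝ) : Matrix (Fin 2) (Fin 2) ℂ :=
  ((v : ℂ) / (sdenom ρ p : ℂ)) •
    !![((p 0 : ℂ) + (p 3 : ℂ) * Complex.I) ^ 2 - ((p 1 : ℂ) - (p 2 : ℂ) * Complex.I) ^ 2,
       2 * Complex.I * ((p 0 : ℂ) * (p 1 : ℂ) - (p 2 : ℂ) * (p 3 : ℂ));
       2 * Complex.I * ((p 0 : ℂ) * (p 1 : ℂ) - (p 2 : ℂ) * (p 3 : ℂ)),
       ((p 0 : ℂ) - (p 3 : ℂ) * Complex.I) ^ 2 - ((p 1 : ℂ) + (p 2 : ℂ) * Complex.I) ^ 2]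

namespace HL

noncomputable def Lm (μ : Fin 4) : (Fin 4 → ℝ) →L[ℝ] ℂ :=
  Complex.ofRealCLM.comp (ContinuousLinearMap.proj μ)

lemma Lm_apply (ν : Fin 4) (w : Fin 4 → ℝ) : Lm ν w = (w ν : ℂ) := rfl

inductive E where
  | const : ℂ → E
  | coord : Fin 4 → E
  | add : E → E → E
  | mul : E → E → E
  | sinv : E

noncomputable def ev (ρ : ℝ) : E → (Fin 4 → ℝ) → ℂ
  | .const c => fun _ => c
  | .coord ν => fun p => (p ν : ℂ)
  | .add a b => fun p => ev ρ a p + ev ρ b p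
  | .mul a b => fun p => ev ρ a p * ev ρ b p
  | .sinv => fun p => ((sdenom ρ p : ℝ) : ℂ)⁻¹

def pd (μ : Fin 4) : E → E
  | .const _ => .const 0
  | .coord ν => .const (if ν = μ then 1 else 0)
  | .add a b => .add (pd μ a) (pd μ b)
  | .mul a b => .add (.mul (pd μ a) b) (.mul a (pd μ b))
  | .sinv => .mul (.const (-2)) (.mul (.coord μ) (.mul .sinv .sinv))

lemma sdenom_pos {ρ : ℝ} (hρ : ρ ≠ 0) (p : Fin 4 → ℝ) : 0 < sdenom ρ p := by
  unfold sdenom; positivity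

lemma sdenomC_ne {ρ : ℝ} (hρ : ρ ≠ 0) (p : Fin 4 → ℝ) : ((sdenom ρ p : ℝ) : ℂ) ≠ 0 := by
  exact_mod_cast (sdenom_pos hρ p).ne'

lemma hasFD_sC (ρ : ℝ) (p : Fin 4 → ℝ) :
    HasFDerivAt (fun q : Fin 4 → ℝ => ((sdenom ρ q : ℝ) : ℂ))
      (∑ ν : Fin 4, (2 * (p ν : ℂ)) • Lm ν) p := by
  have h1 : ∀ ν : Fin 4, HasFDerivAt (fun q : Fin 4 → ℝ => ((q ν : ℝ) : ℂ)) (Lm ν) p :=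
    fun ν => (Lm ν).hasFDerivAt
  have h2 : ∀ ν : Fin 4, HasFDerivAt (fun q : Fin 4 → ℝ => ((q ν : ℝ) : ℂ) * ((q ν : ℝ) : ℂ))
      ((p ν : ℂ) • Lm ν + (p ν : ℂ) • Lm ν) p := fun ν => (h1 ν).mul (h1 ν)
  have h3 := ((((h2 0).add (h2 1)).add (h2 2)).add (h2 3)).add_const ((ρ:ℂ)^2)
  have efun : (fun q : Fin 4 → ℝ =>
      ((q 0 : ℝ) : ℂ) * ((q 0 : ℝ) : ℂ) + ((q 1 : ℝ) : ℂ) * ((q 1 : ℝ) : ℂ)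
      + ((q 2 : ℝ) : ℂ) * ((q 2 : ℝ) : ℂ) + ((q 3 : ℝ) : ℂ) * ((q 3 : ℝ) : ℂ) + (ρ:ℂ)^2)
      = fun q : Fin 4 → ℝ => ((sdenom ρ q : ℝ) : ℂ) := by
    funext q; unfold sdenom; push_cast; ring
  rw [← efun]
  have e : ((p 0 : ℂ) • Lm 0 + (p 0 : ℂ) • Lm 0 + ((p 1 : ℂ) • Lm 1 + (p 1 : ℂ) • Lm 1)
      + ((p 2 : ℂ) • Lm 2 + (p 2 : ℂ) • Lm 2) + ((p 3 : ℂ) • Lm 3 + (p 3 : ℂ) • Lm 3))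
      = ∑ ν : Fin 4, (2 * (p ν : ℂ)) • Lm ν := by
    rw [Fin.sum_univ_four]; ext w
    simp only [ContinuousLinearMap.add_apply, ContinuousLinearMap.smul_apply, smul_eq_mul]
    ring
  rw [e] at h3
  exact h3

theorem hasFD (ρ : ℝ) (hρ : ρ ≠ 0) (e : E) (p : Fin 4 → ℝ) :
    HasFDerivAt (ev ρ e) (∑ μ : Fin 4, ev ρ (pd μ e) p • Lm μ) p := by
  induction e with
  | const c =>
      have h := hasFDerivAt_const (𝕜 := ℝ) c p
      have e : (0 : (Fin 4 → ℝ) →L[ℝ] ℂ) = ∑ μ : Fin 4, ev ρ (pd μ (.const c)) p • Lm μ := by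
        ext w; simp [pd, ev]
      exact e ▸ h
  | coord ν =>
      have h := (Lm ν).hasFDerivAt (x := p)
      have e : Lm ν = ∑ μ : Fin 4, ev ρ (pd μ (.coord ν)) p • Lm μ := by
        ext w
        simp only [pd, ev, ContinuousLinearMap.sum_apply, ite_smul, one_smul, zero_smul,
          ContinuousLinearMap.smul_apply]
        simp [apply_ite (fun f : (Fin 4 → ℝ) →L[ℝ] ℂ => f w), Lm_apply]
      exact e ▸ h
  | add a b iha ihb =>
      have h := iha.add ihb
      have e : ((∑ μ : Fin 4, ev ρ (pd μ a) p • Lm μ) + ∑ μ : Fin 4, ev ρ (pd μ b) p • Lm μ)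
          = ∑ μ : Fin 4, ev ρ (pd μ (.add a b)) p • Lm μ := by
        rw [← Finset.sum_add_distrib]
        refine Finset.sum_congr rfl fun μ _ => ?_
        simp only [pd, ev]
        exact (add_smul _ _ _).symm
      exact e ▸ h
  | mul a b iha ihb =>
      have h := iha.mul ihb
      have e : (ev ρ a p • (∑ μ : Fin 4, ev ρ (pd μ b) p • Lm μ)
          + ev ρ b p • (∑ μ : Fin 4, ev ρ (pd μ a) p • Lm μ))
          = ∑ μ : Fin 4, ev ρ (pd μ (.mul a b)) p • Lm μ := by
        ext w
        simp only [pd, ev, ContinuousLinearMap.add_apply, ContinuousLinearMap.smul_apply,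
          ContinuousLinearMap.sum_apply, smul_eq_mul, Finset.mul_sum]
        rw [← Finset.sum_add_distrib]
        exact Finset.sum_congr rfl fun μ _ => by ring
      exact e ▸ h
  | sinv =>
      have hs := sdenomC_ne hρ p
      have h := ((hasFDerivAt_inv (𝕜 := ℂ) hs).restrictScalars ℝ).comp p (hasFD_sC ρ p)
      have e : (ContinuousLinearMap.restrictScalars ℝ
            (ContinuousLinearMap.smulRight (1 : ℂ →L[ℂ] ℂ) (-(((sdenom ρ p : ℝ) : ℂ) ^ 2)⁻¹))).comp
          (∑ ν : Fin 4, (2 * (p ν : ℂ)) • Lm ν)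
          = ∑ μ : Fin 4, ev ρ (pd μ .sinv) p • Lm μ := by
        ext w
        simp only [pd, ev, ContinuousLinearMap.coe_comp', Function.comp_apply,
          ContinuousLinearMap.coe_restrictScalars', ContinuousLinearMap.smulRight_apply,
          ContinuousLinearMap.one_apply, ContinuousLinearMap.sum_apply,
          ContinuousLinearMap.smul_apply, smul_eq_mul]
        rw [Finset.sum_mul]
        refine Finset.sum_congr rfl fun μ _ => ?_
        rw [sq, mul_inv]
        ring
      exact e ▸ h


noncomputable def evM (ρ : ℝ) (M : Matrix (Fin 2) (Fin 2) E) (p : Fin 4 → ℝ) :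
    Matrix (Fin 2) (Fin 2) ℂ :=
  Matrix.of fun i j => ev ρ (M i j) p

lemma pderiv_evM (ρ : ℝ) (hρ : ρ ≠ 0) (M : Matrix (Fin 2) (Fin 2) E) (μ : Fin 4)
    (p : Fin 4 → ℝ) :
    pderiv μ (evM ρ M) p = Matrix.of fun i j => ev ρ (pd μ (M i j)) p := by
  ext i j
  simp only [pderiv, Matrix.of_apply]
  have h : (fun q => evM ρ M q i j) = ev ρ (M i j) := rfl
  rw [h, (hasFD ρ hρ (M i j) p).fderiv]
  simp only [ContinuousLinearMap.sum_apply, ContinuousLinearMap.smul_apply, Lm_apply, smul_eq_mul]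
  simp [Pi.single_apply, apply_ite (fun r : ℝ => (r : ℂ)), mul_ite]

def DcovE (AE : Fin 4 → Matrix (Fin 2) (Fin 2) E) (μ : Fin 4) (K : Matrix (Fin 2) (Fin 2) E) :
    Matrix (Fin 2) (Fin 2) E :=
  Matrix.of fun i j =>
    .add (pd μ (K i j))
      (.add (.mul (.const (-Complex.I)) (.add (.mul (AE μ i 0) (K 0 j)) (.mul (AE μ i 1) (K 1 j))))
            (.mul (.const (-Complex.I)) (.add (.mul (K i 0) (AE μ j 0)) (.mul (K i 1) (AE μ j 1)))))

lemma Dcov_evM (ρ : ℝ) (hρ : ρ ≠ 0) (AE : Fin 4 → Matrix (Fin 2) (Fin 2) E)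
    (hA : ∀ ν, bpst ρ ν = evM ρ (AE ν)) (μ : Fin 4) (KE : Matrix (Fin 2) (Fin 2) E) :
    Dcov (bpst ρ) μ (evM ρ KE) = evM ρ (DcovE AE μ KE) := by
  funext p
  unfold Dcov
  rw [pderiv_evM ρ hρ, hA]
  ext i j
  fin_cases i <;> fin_cases j <;>
    · simp [evM, DcovE, ev, Matrix.mul_apply, Fin.sum_univ_two, Matrix.sub_apply,
        Matrix.smul_apply, Matrix.transpose_apply, smul_eq_mul]
      ring
noncomputable def xt : E := .coord 0
noncomputable def xx : E := .coord 1
noncomputable def xy : E := .coord 2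
noncomputable def xz : E := .coord 3
noncomputable def nE (a : E) : E := .mul (.const (-1)) a
noncomputable def iE (a : E) : E := .mul (.const Complex.I) a

noncomputable def AE : Fin 4 → Matrix (Fin 2) (Fin 2) E :=
  ![ !![.mul .sinv (nE xz), .mul .sinv (.add (nE xx) (iE xy));
       .mul .sinv (.add (nE xx) (nE (iE xy))), .mul .sinv xz],
     !![.mul .sinv xy, .mul .sinv (.add xt (iE xz));
       .mul .sinv (.add xt (nE (iE xz))), .mul .sinv (nE xy)],
     !![.mul .sinv (nE xx), .mul .sinv (.add (nE (iE xt)) xz);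
       .mul .sinv (.add (iE xt) xz), .mul .sinv xx],
     !![.mul .sinv xt, .mul .sinv (.add (nE (iE xx)) (nE xy));
       .mul .sinv (.add (iE xx) (nE xy)), .mul .sinv (nE xt)] ]

lemma hA (ρ : ℝ) : ∀ ν, bpst ρ ν = evM ρ (AE ν) := by
  intro ν
  fin_cases ν <;> funext p <;> ext i j <;> fin_cases i <;> fin_cases j <;>
    · simp [bpst, evM, ev, AE, Matrix.smul_apply, smul_eq_mul, nE, iE, xt, xx, xy, xz,
        -mul_eq_mul_left_iff] <;> ring

noncomputable def HE (v : ℝ) : Matrix (Fin 2) (Fin 2) E :=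
  let tpz : E := .add xt (iE xz)
  let tmz : E := .add xt (nE (iE xz))
  let xmy : E := .add xx (nE (iE xy))
  let xpy : E := .add xx (iE xy)
  let offd : E := .mul (.const ((v:ℂ) * (2*Complex.I)))
      (.mul .sinv (.add (.mul xt xx) (nE (.mul xy xz))))
  !![ .mul (.const (v:ℂ)) (.mul .sinv (.add (.mul tpz tpz) (nE (.mul xmy xmy)))), offd;
      offd, .mul (.const (v:ℂ)) (.mul .sinv (.add (.mul tmz tmz) (nE (.mul xpy xpy)))) ]

lemma hH (ρ v : ℝ) : higgs ρ v = evM ρ (HE v) := by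
  funext p
  ext i j
  fin_cases i <;> fin_cases j <;>
    · simp [higgs, evM, ev, HE, Matrix.smul_apply, smul_eq_mul, nE, iE, xt, xx, xy, xz,
        div_eq_mul_inv]
      ring
lemma hsdC (ρ : ℝ) (p : Fin 4 → ℝ) : ((sdenom ρ p : ℝ) : ℂ)
    = (p 0:ℂ)^2 + (p 1:ℂ)^2 + (p 2:ℂ)^2 + (p 3:ℂ)^2 + (ρ:ℂ)^2 := by
  unfold sdenom; push_cast; ring

lemma I2 : Complex.I ^ 2 = -1 := Complex.I_sq
lemma I3 : Complex.I ^ 3 = -Complex.I := by rw [pow_succ, I2]; ring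
lemma I4 : Complex.I ^ 4 = 1 := by rw [pow_succ, I3]; simp [Complex.I_mul_I]
lemma I5 : Complex.I ^ 5 = Complex.I := by rw [pow_succ, I4, one_mul]
lemma I6 : Complex.I ^ 6 = -1 := by rw [pow_succ, I5, Complex.I_mul_I]
lemma I7 : Complex.I ^ 7 = -Complex.I := by rw [pow_succ, I6]; ring
lemma I8 : Complex.I ^ 8 = 1 := by rw [pow_succ, I7]; simp [Complex.I_mul_I]
lemma I9 : Complex.I ^ 9 = Complex.I := by rw [pow_succ, I8, one_mul]
lemma I10 : Complex.I ^ 10 = -1 := by rw [pow_succ, I9, Complex.I_mul_I]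
lemma I11 : Complex.I ^ 11 = -Complex.I := by rw [pow_succ, I10]; ring
lemma I12 : Complex.I ^ 12 = 1 := by rw [pow_succ, I11]; simp [Complex.I_mul_I]

noncomputable def DE (ρ v : ℝ) : Fin 4 → Matrix (Fin 2) (Fin 2) E :=
  let cf : E := .mul (.const (2*(v:ℂ)*(ρ:ℂ)^2)) (.mul .sinv .sinv)
  ![ !![.mul cf (.add xt (iE xz)), .mul cf (iE xx);
       .mul cf (iE xx), .mul cf (.add xt (nE (iE xz)))],
     !![.mul cf (.add (nE xx) (iE xy)), .mul cf (iE xt);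
       .mul cf (iE xt), .mul cf (.add (nE xx) (nE (iE xy)))],
     !![.mul cf (.add (iE xx) xy), .mul cf (nE (iE xz));
       .mul cf (nE (iE xz)), .mul cf (.add (nE (iE xx)) xy)],
     !![.mul cf (.add (iE xt) (nE xz)), .mul cf (nE (iE xy));
       .mul cf (nE (iE xy)), .mul cf (.add (nE (iE xt)) (nE xz))] ]

lemma s1_0_0_0 (ρ v : ℝ) (hρ : ρ ≠ 0) (p : Fin 4 → ℝ) :
    ev ρ (DcovE AE 0 (HE v) 0 0) p = ev ρ (DE ρ v 0 0 0) p := by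
  have hu : ((p 0:ℂ)^2+(p 1:ℂ)^2+(p 2:ℂ)^2+(p 3:ℂ)^2+(ρ:ℂ)^2) * (((sdenom ρ p : ℝ):ℂ))⁻¹ = 1 := by
    rw [← hsdC ρ p]; exact mul_inv_cancel₀ (sdenomC_ne hρ p)
  simp only [DcovE, DE, AE, HE, pd, ev, nE, iE, xt, xx, xy, xz, Matrix.of_apply,
    Matrix.cons_val', Matrix.cons_val_zero, Matrix.cons_val_one, Matrix.head_cons,
    Matrix.head_fin_const, Matrix.empty_val', Matrix.cons_val_fin_one, Fin.isValue,
    Fin.reduceEq, reduceIte]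
  linear_combination ((-2:ℂ) * (p 3:ℂ) * (v:ℂ) * (((sdenom ρ p : ℝ):ℂ))⁻¹ * Complex.I + (-2:ℂ) * (p 0:ℂ) * (v:ℂ) * (((sdenom ρ p : ℝ):ℂ))⁻¹) * hu + ((2:ℂ) * (p 3:ℂ)^3 * (v:ℂ) * (((sdenom ρ p : ℝ):ℂ))⁻¹^2 * Complex.I + (2:ℂ) * (p 2:ℂ)^2 * (p 3:ℂ) * (v:ℂ) * (((sdenom ρ p : ℝ):ℂ))⁻¹^2 * Complex.I + (2:ℂ) * (p 0:ℂ) * (p 3:ℂ)^2 * (v:ℂ) * (((sdenom ρ p : ℝ):ℂ))⁻¹^2 + (2:ℂ) * (p 0:ℂ) * (p 2:ℂ)^2 * (v:ℂ) * (((sdenom ρ p : ℝ):ℂ))⁻¹^2 + (-4:ℂ) * (p 0:ℂ) * (p 1:ℂ) * (p 2:ℂ) * (v:ℂ) * (((sdenom ρ p : ℝ):ℂ))⁻¹^2 * Complex.I + (4:ℂ) * (p 0:ℂ) * (p 1:ℂ)^2 * (v:ℂ) * (((sdenom ρ p : ℝ):ℂ))⁻¹^2) * Complex.I_mul_I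

lemma s1_0_0_1 (ρ v : ℝ) (hρ : ρ ≠ 0) (p : Fin 4 → ℝ) :
    ev ρ (DcovE AE 0 (HE v) 0 1) p = ev ρ (DE ρ v 0 0 1) p := by
  have hu : ((p 0:ℂ)^2+(p 1:ℂ)^2+(p 2:ℂ)^2+(p 3:ℂ)^2+(ρ:ℂ)^2) * (((sdenom ρ p : ℝ):ℂ))⁻¹ = 1 := by
    rw [← hsdC ρ p]; exact mul_inv_cancel₀ (sdenomC_ne hρ p)
  simp only [DcovE, DE, AE, HE, pd, ev, nE, iE, xt, xx, xy, xz, Matrix.of_apply,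
    Matrix.cons_val', Matrix.cons_val_zero, Matrix.cons_val_one, Matrix.head_cons,
    Matrix.head_fin_const, Matrix.empty_val', Matrix.cons_val_fin_one, Fin.isValue,
    Fin.reduceEq, reduceIte]
  linear_combination ((-2:ℂ) * (p 1:ℂ) * (v:ℂ) * (((sdenom ρ p : ℝ):ℂ))⁻¹ * Complex.I) * hu + ((2:ℂ) * (p 1:ℂ) * (p 3:ℂ)^2 * (v:ℂ) * (((sdenom ρ p : ℝ):ℂ))⁻¹^2 * Complex.I + (2:ℂ) * (p 1:ℂ) * (p 2:ℂ)^2 * (v:ℂ) * (((sdenom ρ p : ℝ):ℂ))⁻¹^2 * Complex.I + (4:ℂ) * (p 0:ℂ) * (p 2:ℂ) * (p 3:ℂ) * (v:ℂ) * (((sdenom ρ p : ℝ):ℂ))⁻¹^2 * Complex.I) * Complex.I_mul_I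

lemma s1_0_1_0 (ρ v : ℝ) (hρ : ρ ≠ 0) (p : Fin 4 → ℝ) :
    ev ρ (DcovE AE 0 (HE v) 1 0) p = ev ρ (DE ρ v 0 1 0) p := by
  have hu : ((p 0:ℂ)^2+(p 1:ℂ)^2+(p 2:ℂ)^2+(p 3:ℂ)^2+(ρ:ℂ)^2) * (((sdenom ρ p : ℝ):ℂ))⁻¹ = 1 := by
    rw [← hsdC ρ p]; exact mul_inv_cancel₀ (sdenomC_ne hρ p)
  simp only [DcovE, DE, AE, HE, pd, ev, nE, iE, xt, xx, xy, xz, Matrix.of_apply,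
    Matrix.cons_val', Matrix.cons_val_zero, Matrix.cons_val_one, Matrix.head_cons,
    Matrix.head_fin_const, Matrix.empty_val', Matrix.cons_val_fin_one, Fin.isValue,
    Fin.reduceEq, reduceIte]
  linear_combination ((-2:ℂ) * (p 1:ℂ) * (v:ℂ) * (((sdenom ρ p : ℝ):ℂ))⁻¹ * Complex.I) * hu + ((2:ℂ) * (p 1:ℂ) * (p 3:ℂ)^2 * (v:ℂ) * (((sdenom ρ p : ℝ):ℂ))⁻¹^2 * Complex.I + (2:ℂ) * (p 1:ℂ) * (p 2:ℂ)^2 * (v:ℂ) * (((sdenom ρ p : ℝ):ℂ))⁻¹^2 * Complex.I + (4:ℂ) * (p 0:ℂ) * (p 2:ℂ) * (p 3:ℂ) * (v:ℂ) * (((sdenom ρ p : ℝ):ℂ))⁻¹^2 * Complex.I) * Complex.I_mul_I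

lemma s1_0_1_1 (ρ v : ℝ) (hρ : ρ ≠ 0) (p : Fin 4 → ℝ) :
    ev ρ (DcovE AE 0 (HE v) 1 1) p = ev ρ (DE ρ v 0 1 1) p := by
  have hu : ((p 0:ℂ)^2+(p 1:ℂ)^2+(p 2:ℂ)^2+(p 3:ℂ)^2+(ρ:ℂ)^2) * (((sdenom ρ p : ℝ):ℂ))⁻¹ = 1 := by
    rw [← hsdC ρ p]; exact mul_inv_cancel₀ (sdenomC_ne hρ p)
  simp only [DcovE, DE, AE, HE, pd, ev, nE, iE, xt, xx, xy, xz, Matrix.of_apply,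
    Matrix.cons_val', Matrix.cons_val_zero, Matrix.cons_val_one, Matrix.head_cons,
    Matrix.head_fin_const, Matrix.empty_val', Matrix.cons_val_fin_one, Fin.isValue,
    Fin.reduceEq, reduceIte]
  linear_combination ((2:ℂ) * (p 3:ℂ) * (v:ℂ) * (((sdenom ρ p : ℝ):ℂ))⁻¹ * Complex.I + (-2:ℂ) * (p 0:ℂ) * (v:ℂ) * (((sdenom ρ p : ℝ):ℂ))⁻¹) * hu + ((-2:ℂ) * (p 3:ℂ)^3 * (v:ℂ) * (((sdenom ρ p : ℝ):ℂ))⁻¹^2 * Complex.I + (-2:ℂ) * (p 2:ℂ)^2 * (p 3:ℂ) * (v:ℂ) * (((sdenom ρ p : ℝ):ℂ))⁻¹^2 * Complex.I + (2:ℂ) * (p 0:ℂ) * (p 3:ℂ)^2 * (v:ℂ) * (((sdenom ρ p : ℝ):ℂ))⁻¹^2 + (2:ℂ) * (p 0:ℂ) * (p 2:ℂ)^2 * (v:ℂ) * (((sdenom ρ p : ℝ):ℂ))⁻¹^2 + (4:ℂ) * (p 0:ℂ) * (p 1:ℂ) * (p 2:ℂ) * (v:ℂ) * (((sdenom ρ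 p : ℝ):ℂ))⁻¹^2 * Complex.I + (4:ℂ) * (p 0:ℂ) * (p 1:ℂ)^2 * (v:ℂ) * (((sdenom ρ p : ℝ):ℂ))⁻¹^2) * Complex.I_mul_I

lemma s1_1_0_0 (ρ v : ℝ) (hρ : ρ ≠ 0) (p : Fin 4 → ℝ) :
    ev ρ (DcovE AE 1 (HE v) 0 0) p = ev ρ (DE ρ v 1 0 0) p := by
  have hu : ((p 0:ℂ)^2+(p 1:ℂ)^2+(p 2:ℂ)^2+(p 3:ℂ)^2+(ρ:ℂ)^2) * (((sdenom ρ p : ℝ):ℂ))⁻¹ = 1 := by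
    rw [← hsdC ρ p]; exact mul_inv_cancel₀ (sdenomC_ne hρ p)
  simp only [DcovE, DE, AE, HE, pd, ev, nE, iE, xt, xx, xy, xz, Matrix.of_apply,
    Matrix.cons_val', Matrix.cons_val_zero, Matrix.cons_val_one, Matrix.head_cons,
    Matrix.head_fin_const, Matrix.empty_val', Matrix.cons_val_fin_one, Fin.isValue,
    Fin.reduceEq, reduceIte]
  linear_combination ((-2:ℂ) * (p 2:ℂ) * (v:ℂ) * (((sdenom ρ p : ℝ):ℂ))⁻¹ * Complex.I + (2:ℂ) * (p 1:ℂ) * (v:ℂ) * (((sdenom ρ p : ℝ):ℂ))⁻¹) * hu + ((2:ℂ) * (p 2:ℂ) * (p 3:ℂ)^2 * (v:ℂ) * (((sdenom ρ p : ℝ):ℂ))⁻¹^2 * Complex.I + (2:ℂ) * (p 2:ℂ)^3 * (v:ℂ) * (((sdenom ρ p : ℝ):ℂ))⁻¹^2 * Complex.I + (-2:ℂ) * (p 1:ℂ) * (p 3:ℂ)^2 * (v:ℂ) * (((sdenom ρ p : ℝ):ℂ))⁻¹^2 + (-2:ℂ) * (p 1:ℂ) * (p 2:ℂ)^2 * (v:ℂ)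 * (((sdenom ρ p : ℝ):ℂ))⁻¹^2 + (-4:ℂ) * (p 0:ℂ) * (p 1:ℂ) * (p 3:ℂ) * (v:ℂ) * (((sdenom ρ p : ℝ):ℂ))⁻¹^2 * Complex.I + (-4:ℂ) * (p 0:ℂ)^2 * (p 1:ℂ) * (v:ℂ) * (((sdenom ρ p : ℝ):ℂ))⁻¹^2) * Complex.I_mul_I

lemma s1_1_0_1 (ρ v : ℝ) (hρ : ρ ≠ 0) (p : Fin 4 → ℝ) :
    ev ρ (DcovE AE 1 (HE v) 0 1) p = ev ρ (DE ρ v 1 0 1) p := by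
  have hu : ((p 0:ℂ)^2+(p 1:ℂ)^2+(p 2:ℂ)^2+(p 3:ℂ)^2+(ρ:ℂ)^2) * (((sdenom ρ p : ℝ):ℂ))⁻¹ = 1 := by
    rw [← hsdC ρ p]; exact mul_inv_cancel₀ (sdenomC_ne hρ p)
  simp only [DcovE, DE, AE, HE, pd, ev, nE, iE, xt, xx, xy, xz, Matrix.of_apply,
    Matrix.cons_val', Matrix.cons_val_zero, Matrix.cons_val_one, Matrix.head_cons,
    Matrix.head_fin_const, Matrix.empty_val', Matrix.cons_val_fin_one, Fin.isValue,
    Fin.reduceEq, reduceIte]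
  linear_combination ((-2:ℂ) * (p 0:ℂ) * (v:ℂ) * (((sdenom ρ p : ℝ):ℂ))⁻¹ * Complex.I) * hu + ((4:ℂ) * (p 1:ℂ) * (p 2:ℂ) * (p 3:ℂ) * (v:ℂ) * (((sdenom ρ p : ℝ):ℂ))⁻¹^2 * Complex.I + (2:ℂ) * (p 0:ℂ) * (p 3:ℂ)^2 * (v:ℂ) * (((sdenom ρ p : ℝ):ℂ))⁻¹^2 * Complex.I + (2:ℂ) * (p 0:ℂ) * (p 2:ℂ)^2 * (v:ℂ) * (((sdenom ρ p : ℝ):ℂ))⁻¹^2 * Complex.I) * Complex.I_mul_I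

lemma s1_1_1_0 (ρ v : ℝ) (hρ : ρ ≠ 0) (p : Fin 4 → ℝ) :
    ev ρ (DcovE AE 1 (HE v) 1 0) p = ev ρ (DE ρ v 1 1 0) p := by
  have hu : ((p 0:ℂ)^2+(p 1:ℂ)^2+(p 2:ℂ)^2+(p 3:ℂ)^2+(ρ:ℂ)^2) * (((sdenom ρ p : ℝ):ℂ))⁻¹ = 1 := by
    rw [← hsdC ρ p]; exact mul_inv_cancel₀ (sdenomC_ne hρ p)
  simp only [DcovE, DE, AE, HE, pd, ev, nE, iE, xt, xx, xy, xz, Matrix.of_apply,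
    Matrix.cons_val', Matrix.cons_val_zero, Matrix.cons_val_one, Matrix.head_cons,
    Matrix.head_fin_const, Matrix.empty_val', Matrix.cons_val_fin_one, Fin.isValue,
    Fin.reduceEq, reduceIte]
  linear_combination ((-2:ℂ) * (p 0:ℂ) * (v:ℂ) * (((sdenom ρ p : ℝ):ℂ))⁻¹ * Complex.I) * hu + ((4:ℂ) * (p 1:ℂ) * (p 2:ℂ) * (p 3:ℂ) * (v:ℂ) * (((sdenom ρ p : ℝ):ℂ))⁻¹^2 * Complex.I + (2:ℂ) * (p 0:ℂ) * (p 3:ℂ)^2 * (v:ℂ) * (((sdenom ρ p : ℝ):ℂ))⁻¹^2 * Complex.I + (2:ℂ) * (p 0:ℂ) * (p 2:ℂ)^2 * (v:ℂ) * (((sdenom ρ p : ℝ):ℂ))⁻¹^2 * Complex.I) * Complex.I_mul_I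

lemma s1_1_1_1 (ρ v : ℝ) (hρ : ρ ≠ 0) (p : Fin 4 → ℝ) :
    ev ρ (DcovE AE 1 (HE v) 1 1) p = ev ρ (DE ρ v 1 1 1) p := by
  have hu : ((p 0:ℂ)^2+(p 1:ℂ)^2+(p 2:ℂ)^2+(p 3:ℂ)^2+(ρ:ℂ)^2) * (((sdenom ρ p : ℝ):ℂ))⁻¹ = 1 := by
    rw [← hsdC ρ p]; exact mul_inv_cancel₀ (sdenomC_ne hρ p)
  simp only [DcovE, DE, AE, HE, pd, ev, nE, iE, xt, xx, xy, xz, Matrix.of_apply,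
    Matrix.cons_val', Matrix.cons_val_zero, Matrix.cons_val_one, Matrix.head_cons,
    Matrix.head_fin_const, Matrix.empty_val', Matrix.cons_val_fin_one, Fin.isValue,
    Fin.reduceEq, reduceIte]
  linear_combination ((2:ℂ) * (p 2:ℂ) * (v:ℂ) * (((sdenom ρ p : ℝ):ℂ))⁻¹ * Complex.I + (2:ℂ) * (p 1:ℂ) * (v:ℂ) * (((sdenom ρ p : ℝ):ℂ))⁻¹) * hu + ((-2:ℂ) * (p 2:ℂ) * (p 3:ℂ)^2 * (v:ℂ) * (((sdenom ρ p : ℝ):ℂ))⁻¹^2 * Complex.I + (-2:ℂ) * (p 2:ℂ)^3 * (v:ℂ) * (((sdenom ρ p : ℝ):ℂ))⁻¹^2 * Complex.I + (-2:ℂ) * (p 1:ℂ) * (p 3:ℂ)^2 * (v:ℂ) * (((sdenom ρ p : ℝ):ℂ))⁻¹^2 + (-2:ℂ) * (p 1:ℂ) * (p 2:ℂ)^2 * (v:ℂ) * (((sdenom ρ p : ℝ):ℂ))⁻¹^2 + (4:ℂ) * (p 0:ℂ) * (p 1:ℂ) * (p 3:ℂ) * (v:ℂ) * (((sdenom ρ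 p : ℝ):ℂ))⁻¹^2 * Complex.I + (-4:ℂ) * (p 0:ℂ)^2 * (p 1:ℂ) * (v:ℂ) * (((sdenom ρ p : ℝ):ℂ))⁻¹^2) * Complex.I_mul_I

lemma s1_2_0_0 (ρ v : ℝ) (hρ : ρ ≠ 0) (p : Fin 4 → ℝ) :
    ev ρ (DcovE AE 2 (HE v) 0 0) p = ev ρ (DE ρ v 2 0 0) p := by
  have hu : ((p 0:ℂ)^2+(p 1:ℂ)^2+(p 2:ℂ)^2+(p 3:ℂ)^2+(ρ:ℂ)^2) * (((sdenom ρ p : ℝ):ℂ))⁻¹ = 1 := by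
    rw [← hsdC ρ p]; exact mul_inv_cancel₀ (sdenomC_ne hρ p)
  simp only [DcovE, DE, AE, HE, pd, ev, nE, iE, xt, xx, xy, xz, Matrix.of_apply,
    Matrix.cons_val', Matrix.cons_val_zero, Matrix.cons_val_one, Matrix.head_cons,
    Matrix.head_fin_const, Matrix.empty_val', Matrix.cons_val_fin_one, Fin.isValue,
    Fin.reduceEq, reduceIte, Matrix.cons_val]
  linear_combination ((2:ℂ) * (p 2:ℂ) * (v:ℂ) * (((sdenom ρ p : ℝ):ℂ))⁻¹ * Complex.I^2 + (-2:ℂ) * (p 1:ℂ) * (v:ℂ) * (((sdenom ρ p : ℝ):ℂ))⁻¹ * Complex.I) * hu + ((-2:ℂ) * (p 2:ℂ) * (ρ:ℂ)^2 * (v:ℂ) * (((sdenom ρ p : ℝ):ℂ))⁻¹^2 + (2:ℂ) * (p 1:ℂ) * (p 3:ℂ)^2 * (v:ℂ) * (((sdenom ρ p : ℝ):ℂ))⁻¹^2 * Complex.I + (-2:ℂ) * (p 1:ℂ) * (p 2:ℂ)^2 * (v:ℂ) * (((sdenom ρ p : ℝ):ℂ))⁻¹^2 * Complex.I + (2:ℂ)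 * (p 1:ℂ)^2 * (p 2:ℂ) * (v:ℂ) * (((sdenom ρ p : ℝ):ℂ))⁻¹^2 + (-4:ℂ) * (p 0:ℂ) * (p 2:ℂ) * (p 3:ℂ) * (v:ℂ) * (((sdenom ρ p : ℝ):ℂ))⁻¹^2 * Complex.I + (-2:ℂ) * (p 0:ℂ)^2 * (p 2:ℂ) * (v:ℂ) * (((sdenom ρ p : ℝ):ℂ))⁻¹^2 + (4:ℂ) * (p 0:ℂ)^2 * (p 1:ℂ) * (v:ℂ) * (((sdenom ρ p : ℝ):ℂ))⁻¹^2 * Complex.I) * Complex.I_mul_I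

lemma s1_2_0_1 (ρ v : ℝ) (hρ : ρ ≠ 0) (p : Fin 4 → ℝ) :
    ev ρ (DcovE AE 2 (HE v) 0 1) p = ev ρ (DE ρ v 2 0 1) p := by
  have hu : ((p 0:ℂ)^2+(p 1:ℂ)^2+(p 2:ℂ)^2+(p 3:ℂ)^2+(ρ:ℂ)^2) * (((sdenom ρ p : ℝ):ℂ))⁻¹ = 1 := by
    rw [← hsdC ρ p]; exact mul_inv_cancel₀ (sdenomC_ne hρ p)
  simp only [DcovE, DE, AE, HE, pd, ev, nE, iE, xt, xx, xy, xz, Matrix.of_apply,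
    Matrix.cons_val', Matrix.cons_val_zero, Matrix.cons_val_one, Matrix.head_cons,
    Matrix.head_fin_const, Matrix.empty_val', Matrix.cons_val_fin_one, Fin.isValue,
    Fin.reduceEq, reduceIte, Matrix.cons_val]
  linear_combination ((2:ℂ) * (p 3:ℂ) * (v:ℂ) * (((sdenom ρ p : ℝ):ℂ))⁻¹ * Complex.I) * hu + ((-2:ℂ) * (p 3:ℂ)^3 * (v:ℂ) * (((sdenom ρ p : ℝ):ℂ))⁻¹^2 * Complex.I + (2:ℂ) * (p 2:ℂ)^2 * (p 3:ℂ) * (v:ℂ) * (((sdenom ρ p : ℝ):ℂ))⁻¹^2 * Complex.I + (-4:ℂ) * (p 0:ℂ) * (p 1:ℂ) * (p 2:ℂ) * (v:ℂ) * (((sdenom ρ p : ℝ):ℂ))⁻¹^2 * Complex.I + (-4:ℂ) * (p 0:ℂ)^2 * (p 3:ℂ) * (v:ℂ) * (((sdenom ρ p : ℝ):ℂ))⁻¹^2 * Complex.I) * Complex.I_mul_I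

lemma s1_2_1_0 (ρ v : ℝ) (hρ : ρ ≠ 0) (p : Fin 4 → ℝ) :
    ev ρ (DcovE AE 2 (HE v) 1 0) p = ev ρ (DE ρ v 2 1 0) p := by
  have hu : ((p 0:ℂ)^2+(p 1:ℂ)^2+(p 2:ℂ)^2+(p 3:ℂ)^2+(ρ:ℂ)^2) * (((sdenom ρ p : ℝ):ℂ))⁻¹ = 1 := by
    rw [← hsdC ρ p]; exact mul_inv_cancel₀ (sdenomC_ne hρ p)
  simp only [DcovE, DE, AE, HE, pd, ev, nE, iE, xt, xx, xy, xz, Matrix.of_apply,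
    Matrix.cons_val', Matrix.cons_val_zero, Matrix.cons_val_one, Matrix.head_cons,
    Matrix.head_fin_const, Matrix.empty_val', Matrix.cons_val_fin_one, Fin.isValue,
    Fin.reduceEq, reduceIte, Matrix.cons_val]
  linear_combination ((2:ℂ) * (p 3:ℂ) * (v:ℂ) * (((sdenom ρ p : ℝ):ℂ))⁻¹ * Complex.I) * hu + ((-2:ℂ) * (p 3:ℂ)^3 * (v:ℂ) * (((sdenom ρ p : ℝ):ℂ))⁻¹^2 * Complex.I + (2:ℂ) * (p 2:ℂ)^2 * (p 3:ℂ) * (v:ℂ) * (((sdenom ρ p : ℝ):ℂ))⁻¹^2 * Complex.I + (-4:ℂ) * (p 0:ℂ) * (p 1:ℂ) * (p 2:ℂ) * (v:ℂ) * (((sdenom ρ p : ℝ):ℂ))⁻¹^2 * Complex.I + (-4:ℂ) * (p 0:ℂ)^2 * (p 3:ℂ) * (v:ℂ) * (((sdenom ρ p : ℝ):ℂ))⁻¹^2 * Complex.I) * Complex.I_mul_I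

lemma s1_2_1_1 (ρ v : ℝ) (hρ : ρ ≠ 0) (p : Fin 4 → ℝ) :
    ev ρ (DcovE AE 2 (HE v) 1 1) p = ev ρ (DE ρ v 2 1 1) p := by
  have hu : ((p 0:ℂ)^2+(p 1:ℂ)^2+(p 2:ℂ)^2+(p 3:ℂ)^2+(ρ:ℂ)^2) * (((sdenom ρ p : ℝ):ℂ))⁻¹ = 1 := by
    rw [← hsdC ρ p]; exact mul_inv_cancel₀ (sdenomC_ne hρ p)
  simp only [DcovE, DE, AE, HE, pd, ev, nE, iE, xt, xx, xy, xz, Matrix.of_apply,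
    Matrix.cons_val', Matrix.cons_val_zero, Matrix.cons_val_one, Matrix.head_cons,
    Matrix.head_fin_const, Matrix.empty_val', Matrix.cons_val_fin_one, Fin.isValue,
    Fin.reduceEq, reduceIte, Matrix.cons_val]
  linear_combination ((2:ℂ) * (p 2:ℂ) * (v:ℂ) * (((sdenom ρ p : ℝ):ℂ))⁻¹ * Complex.I^2 + (2:ℂ) * (p 1:ℂ) * (v:ℂ) * (((sdenom ρ p : ℝ):ℂ))⁻¹ * Complex.I) * hu + ((-2:ℂ) * (p 2:ℂ) * (ρ:ℂ)^2 * (v:ℂ) * (((sdenom ρ p : ℝ):ℂ))⁻¹^2 + (-2:ℂ) * (p 1:ℂ) * (p 3:ℂ)^2 * (v:ℂ) * (((sdenom ρ p : ℝ):ℂ))⁻¹^2 * Complex.I + (2:ℂ) * (p 1:ℂ) * (p 2:ℂ)^2 * (v:ℂ) * (((sdenom ρ p : ℝ):ℂ))⁻¹^2 * Complex.I + (2:ℂ) * (p 1:ℂ)^2 * (p 2:ℂ) * (v:ℂ) * (((sdenom ρ p : ℝ):ℂ))⁻¹^2 + (4:ℂ) * (p 0:ℂ) * (p 2:ℂ)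 * (p 3:ℂ) * (v:ℂ) * (((sdenom ρ p : ℝ):ℂ))⁻¹^2 * Complex.I + (-2:ℂ) * (p 0:ℂ)^2 * (p 2:ℂ) * (v:ℂ) * (((sdenom ρ p : ℝ):ℂ))⁻¹^2 + (-4:ℂ) * (p 0:ℂ)^2 * (p 1:ℂ) * (v:ℂ) * (((sdenom ρ p : ℝ):ℂ))⁻¹^2 * Complex.I) * Complex.I_mul_I

lemma s1_3_0_0 (ρ v : ℝ) (hρ : ρ ≠ 0) (p : Fin 4 → ℝ) :
    ev ρ (DcovE AE 3 (HE v) 0 0) p = ev ρ (DE ρ v 3 0 0) p := by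
  have hu : ((p 0:ℂ)^2+(p 1:ℂ)^2+(p 2:ℂ)^2+(p 3:ℂ)^2+(ρ:ℂ)^2) * (((sdenom ρ p : ℝ):ℂ))⁻¹ = 1 := by
    rw [← hsdC ρ p]; exact mul_inv_cancel₀ (sdenomC_ne hρ p)
  simp only [DcovE, DE, AE, HE, pd, ev, nE, iE, xt, xx, xy, xz, Matrix.of_apply,
    Matrix.cons_val', Matrix.cons_val_zero, Matrix.cons_val_one, Matrix.head_cons,
    Matrix.head_fin_const, Matrix.empty_val', Matrix.cons_val_fin_one, Fin.isValue,
    Fin.reduceEq, reduceIte, Matrix.cons_val]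
  linear_combination ((-2:ℂ) * (p 3:ℂ) * (v:ℂ) * (((sdenom ρ p : ℝ):ℂ))⁻¹ * Complex.I^2 + (-2:ℂ) * (p 0:ℂ) * (v:ℂ) * (((sdenom ρ p : ℝ):ℂ))⁻¹ * Complex.I) * hu + ((2:ℂ) * (p 3:ℂ) * (ρ:ℂ)^2 * (v:ℂ) * (((sdenom ρ p : ℝ):ℂ))⁻¹^2 + (-4:ℂ) * (p 1:ℂ) * (p 2:ℂ) * (p 3:ℂ) * (v:ℂ) * (((sdenom ρ p : ℝ):ℂ))⁻¹^2 * Complex.I + (2:ℂ) * (p 1:ℂ)^2 * (p 3:ℂ) * (v:ℂ) * (((sdenom ρ p : ℝ):ℂ))⁻¹^2 + (-2:ℂ) * (p 0:ℂ) * (p 3:ℂ)^2 * (v:ℂ) * (((sdenom ρ p : ℝ):ℂ))⁻¹^2 * Complex.I + (2:ℂ) * (p 0:ℂ) * (p 2:ℂ)^2 * (v:ℂ) * (((sdenom ρ p : ℝ):ℂ))⁻¹^2 * Complex.I + (4:ℂ) * (p 0:ℂ) * (p 1:ℂ)^2 * (v:ℂ) * (((sdenom ρ p : ℝ):ℂ))⁻¹^2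 * Complex.I + (-2:ℂ) * (p 0:ℂ)^2 * (p 3:ℂ) * (v:ℂ) * (((sdenom ρ p : ℝ):ℂ))⁻¹^2) * Complex.I_mul_I

lemma s1_3_0_1 (ρ v : ℝ) (hρ : ρ ≠ 0) (p : Fin 4 → ℝ) :
    ev ρ (DcovE AE 3 (HE v) 0 1) p = ev ρ (DE ρ v 3 0 1) p := by
  have hu : ((p 0:ℂ)^2+(p 1:ℂ)^2+(p 2:ℂ)^2+(p 3:ℂ)^2+(ρ:ℂ)^2) * (((sdenom ρ p : ℝ):ℂ))⁻¹ = 1 := by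
    rw [← hsdC ρ p]; exact mul_inv_cancel₀ (sdenomC_ne hρ p)
  simp only [DcovE, DE, AE, HE, pd, ev, nE, iE, xt, xx, xy, xz, Matrix.of_apply,
    Matrix.cons_val', Matrix.cons_val_zero, Matrix.cons_val_one, Matrix.head_cons,
    Matrix.head_fin_const, Matrix.empty_val', Matrix.cons_val_fin_one, Fin.isValue,
    Fin.reduceEq, reduceIte, Matrix.cons_val]
  linear_combination ((2:ℂ) * (p 2:ℂ) * (v:ℂ) * (((sdenom ρ p : ℝ):ℂ))⁻¹ * Complex.I) * hu + ((2:ℂ) * (p 2:ℂ) * (p 3:ℂ)^2 * (v:ℂ) * (((sdenom ρ p : ℝ):ℂ))⁻¹^2 * Complex.I + (-2:ℂ) * (p 2:ℂ)^3 * (v:ℂ) * (((sdenom ρ p : ℝ):ℂ))⁻¹^2 * Complex.I + (-4:ℂ) * (p 1:ℂ)^2 * (p 2:ℂ) * (v:ℂ) * (((sdenom ρ p : ℝ):ℂ))⁻¹^2 * Complex.I + (-4:ℂ) * (p 0:ℂ) * (p 1:ℂ) * (p 3:ℂ) * (v:ℂ) * (((sdenom ρ p : ℝ):ℂ))⁻¹^2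 * Complex.I) * Complex.I_mul_I

lemma s1_3_1_0 (ρ v : ℝ) (hρ : ρ ≠ 0) (p : Fin 4 → ℝ) :
    ev ρ (DcovE AE 3 (HE v) 1 0) p = ev ρ (DE ρ v 3 1 0) p := by
  have hu : ((p 0:ℂ)^2+(p 1:ℂ)^2+(p 2:ℂ)^2+(p 3:ℂ)^2+(ρ:ℂ)^2) * (((sdenom ρ p : ℝ):ℂ))⁻¹ = 1 := by
    rw [← hsdC ρ p]; exact mul_inv_cancel₀ (sdenomC_ne hρ p)
  simp only [DcovE, DE, AE, HE, pd, ev, nE, iE, xt, xx, xy, xz, Matrix.of_apply,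
    Matrix.cons_val', Matrix.cons_val_zero, Matrix.cons_val_one, Matrix.head_cons,
    Matrix.head_fin_const, Matrix.empty_val', Matrix.cons_val_fin_one, Fin.isValue,
    Fin.reduceEq, reduceIte, Matrix.cons_val]
  linear_combination ((2:ℂ) * (p 2:ℂ) * (v:ℂ) * (((sdenom ρ p : ℝ):ℂ))⁻¹ * Complex.I) * hu + ((2:ℂ) * (p 2:ℂ) * (p 3:ℂ)^2 * (v:ℂ) * (((sdenom ρ p : ℝ):ℂ))⁻¹^2 * Complex.I + (-2:ℂ) * (p 2:ℂ)^3 * (v:ℂ) * (((sdenom ρ p : ℝ):ℂ))⁻¹^2 * Complex.I + (-4:ℂ) * (p 1:ℂ)^2 * (p 2:ℂ) * (v:ℂ) * (((sdenom ρ p : ℝ):ℂ))⁻¹^2 * Complex.I + (-4:ℂ) * (p 0:ℂ) * (p 1:ℂ) * (p 3:ℂ) * (v:ℂ) * (((sdenom ρ p : ℝ):ℂ))⁻¹^2 * Complex.I) * Complex.I_mul_I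

lemma s1_3_1_1 (ρ v : ℝ) (hρ : ρ ≠ 0) (p : Fin 4 → ℝ) :
    ev ρ (DcovE AE 3 (HE v) 1 1) p = ev ρ (DE ρ v 3 1 1) p := by
  have hu : ((p 0:ℂ)^2+(p 1:ℂ)^2+(p 2:ℂ)^2+(p 3:ℂ)^2+(ρ:ℂ)^2) * (((sdenom ρ p : ℝ):ℂ))⁻¹ = 1 := by
    rw [← hsdC ρ p]; exact mul_inv_cancel₀ (sdenomC_ne hρ p)
  simp only [DcovE, DE, AE, HE, pd, ev, nE, iE, xt, xx, xy, xz, Matrix.of_apply,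
    Matrix.cons_val', Matrix.cons_val_zero, Matrix.cons_val_one, Matrix.head_cons,
    Matrix.head_fin_const, Matrix.empty_val', Matrix.cons_val_fin_one, Fin.isValue,
    Fin.reduceEq, reduceIte, Matrix.cons_val]
  linear_combination ((-2:ℂ) * (p 3:ℂ) * (v:ℂ) * (((sdenom ρ p : ℝ):ℂ))⁻¹ * Complex.I^2 + (2:ℂ) * (p 0:ℂ) * (v:ℂ) * (((sdenom ρ p : ℝ):ℂ))⁻¹ * Complex.I) * hu + ((2:ℂ) * (p 3:ℂ) * (ρ:ℂ)^2 * (v:ℂ) * (((sdenom ρ p : ℝ):ℂ))⁻¹^2 + (4:ℂ) * (p 1:ℂ) * (p 2:ℂ) * (p 3:ℂ) * (v:ℂ) * (((sdenom ρ p : ℝ):ℂ))⁻¹^2 * Complex.I + (2:ℂ) * (p 1:ℂ)^2 * (p 3:ℂ) * (v:ℂ) * (((sdenom ρ p : ℝ):ℂ))⁻¹^2 + (2:ℂ) * (p 0:ℂ) * (p 3:ℂ)^2 * (v:ℂ) * (((sdenom ρ p : ℝ):ℂ))⁻¹^2 * Complex.I + (-2:ℂ) * (p 0:ℂ) * (p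 2:ℂ)^2 * (v:ℂ) * (((sdenom ρ p : ℝ):ℂ))⁻¹^2 * Complex.I + (-4:ℂ) * (p 0:ℂ) * (p 1:ℂ)^2 * (v:ℂ) * (((sdenom ρ p : ℝ):ℂ))⁻¹^2 * Complex.I + (-2:ℂ) * (p 0:ℂ)^2 * (p 3:ℂ) * (v:ℂ) * (((sdenom ρ p : ℝ):ℂ))⁻¹^2) * Complex.I_mul_I

lemma fl_0_0 (ρ v : ℝ) (hρ : ρ ≠ 0) (p : Fin 4 → ℝ) :
    ev ρ (DcovE AE 0 (DE ρ v 0) 0 0) p + ev ρ (DcovE AE 1 (DE ρ v 1) 0 0) p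
    + ev ρ (DcovE AE 2 (DE ρ v 2) 0 0) p + ev ρ (DcovE AE 3 (DE ρ v 3) 0 0) p = 0 := by
  have hu : ((p 0:ℂ)^2+(p 1:ℂ)^2+(p 2:ℂ)^2+(p 3:ℂ)^2+(ρ:ℂ)^2) * (((sdenom ρ p : ℝ):ℂ))⁻¹ = 1 := by
    rw [← hsdC ρ p]; exact mul_inv_cancel₀ (sdenomC_ne hρ p)
  simp only [DcovE, DE, AE, HE, pd, ev, nE, iE, xt, xx, xy, xz, Matrix.of_apply,
    Matrix.cons_val', Matrix.cons_val_zero, Matrix.cons_val_one, Matrix.head_cons,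
    Matrix.head_fin_const, Matrix.empty_val', Matrix.cons_val_fin_one, Fin.isValue,
    Fin.reduceEq, reduceIte, Matrix.cons_val]
  linear_combination (0:ℂ) * hu + ((8:ℂ) * (p 3:ℂ)^2 * (ρ:ℂ)^2 * (v:ℂ) * (((sdenom ρ p : ℝ):ℂ))⁻¹^3 + (-8:ℂ) * (p 2:ℂ)^2 * (ρ:ℂ)^2 * (v:ℂ) * (((sdenom ρ p : ℝ):ℂ))⁻¹^3 + (-8:ℂ) * (p 1:ℂ) * (p 2:ℂ) * (ρ:ℂ)^2 * (v:ℂ) * (((sdenom ρ p : ℝ):ℂ))⁻¹^3 * Complex.I + (8:ℂ) * (p 1:ℂ)^2 * (ρ:ℂ)^2 * (v:ℂ) * (((sdenom ρ p : ℝ):ℂ))⁻¹^3 + (-8:ℂ) * (p 0:ℂ) * (p 3:ℂ) * (ρ:ℂ)^2 * (v:ℂ) * (((sdenom ρ p : ℝ):ℂ))⁻¹^3 * Complex.I + (-8:ℂ) * (p 0:ℂ)^2 * (ρ:ℂ)^2 * (v:ℂ) * (((sdenom ρ p : ℝ):ℂ))⁻¹^3) * Complex.I_mul_I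

lemma fl_0_1 (ρ v : ℝ) (hρ : ρ ≠ 0) (p : Fin 4 → ℝ) :
    ev ρ (DcovE AE 0 (DE ρ v 0) 0 1) p + ev ρ (DcovE AE 1 (DE ρ v 1) 0 1) p
    + ev ρ (DcovE AE 2 (DE ρ v 2) 0 1) p + ev ρ (DcovE AE 3 (DE ρ v 3) 0 1) p = 0 := by
  have hu : ((p 0:ℂ)^2+(p 1:ℂ)^2+(p 2:ℂ)^2+(p 3:ℂ)^2+(ρ:ℂ)^2) * (((sdenom ρ p : ℝ):ℂ))⁻¹ = 1 := by
    rw [← hsdC ρ p]; exact mul_inv_cancel₀ (sdenomC_ne hρ p)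
  simp only [DcovE, DE, AE, HE, pd, ev, nE, iE, xt, xx, xy, xz, Matrix.of_apply,
    Matrix.cons_val', Matrix.cons_val_zero, Matrix.cons_val_one, Matrix.head_cons,
    Matrix.head_fin_const, Matrix.empty_val', Matrix.cons_val_fin_one, Fin.isValue,
    Fin.reduceEq, reduceIte, Matrix.cons_val]
  linear_combination (0:ℂ) * hu + ((8:ℂ) * (p 2:ℂ) * (p 3:ℂ) * (ρ:ℂ)^2 * (v:ℂ) * (((sdenom ρ p : ℝ):ℂ))⁻¹^3 * Complex.I + (-8:ℂ) * (p 0:ℂ) * (p 1:ℂ) * (ρ:ℂ)^2 * (v:ℂ) * (((sdenom ρ p : ℝ):ℂ))⁻¹^3 * Complex.I) * Complex.I_mul_I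

lemma fl_1_0 (ρ v : ℝ) (hρ : ρ ≠ 0) (p : Fin 4 → ℝ) :
    ev ρ (DcovE AE 0 (DE ρ v 0) 1 0) p + ev ρ (DcovE AE 1 (DE ρ v 1) 1 0) p
    + ev ρ (DcovE AE 2 (DE ρ v 2) 1 0) p + ev ρ (DcovE AE 3 (DE ρ v 3) 1 0) p = 0 := by
  have hu : ((p 0:ℂ)^2+(p 1:ℂ)^2+(p 2:ℂ)^2+(p 3:ℂ)^2+(ρ:ℂ)^2) * (((sdenom ρ p : ℝ):ℂ))⁻¹ = 1 := by
    rw [← hsdC ρ p]; exact mul_inv_cancel₀ (sdenomC_ne hρ p)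
  simp only [DcovE, DE, AE, HE, pd, ev, nE, iE, xt, xx, xy, xz, Matrix.of_apply,
    Matrix.cons_val', Matrix.cons_val_zero, Matrix.cons_val_one, Matrix.head_cons,
    Matrix.head_fin_const, Matrix.empty_val', Matrix.cons_val_fin_one, Fin.isValue,
    Fin.reduceEq, reduceIte, Matrix.cons_val]
  linear_combination (0:ℂ) * hu + ((8:ℂ) * (p 2:ℂ) * (p 3:ℂ) * (ρ:ℂ)^2 * (v:ℂ) * (((sdenom ρ p : ℝ):ℂ))⁻¹^3 * Complex.I + (-8:ℂ) * (p 0:ℂ) * (p 1:ℂ) * (ρ:ℂ)^2 * (v:ℂ) * (((sdenom ρ p : ℝ):ℂ))⁻¹^3 * Complex.I) * Complex.I_mul_I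

lemma fl_1_1 (ρ v : ℝ) (hρ : ρ ≠ 0) (p : Fin 4 → ℝ) :
    ev ρ (DcovE AE 0 (DE ρ v 0) 1 1) p + ev ρ (DcovE AE 1 (DE ρ v 1) 1 1) p
    + ev ρ (DcovE AE 2 (DE ρ v 2) 1 1) p + ev ρ (DcovE AE 3 (DE ρ v 3) 1 1) p = 0 := by
  have hu : ((p 0:ℂ)^2+(p 1:ℂ)^2+(p 2:ℂ)^2+(p 3:ℂ)^2+(ρ:ℂ)^2) * (((sdenom ρ p : ℝ):ℂ))⁻¹ = 1 := by
    rw [← hsdC ρ p]; exact mul_inv_cancel₀ (sdenomC_ne hρ p)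
  simp only [DcovE, DE, AE, HE, pd, ev, nE, iE, xt, xx, xy, xz, Matrix.of_apply,
    Matrix.cons_val', Matrix.cons_val_zero, Matrix.cons_val_one, Matrix.head_cons,
    Matrix.head_fin_const, Matrix.empty_val', Matrix.cons_val_fin_one, Fin.isValue,
    Fin.reduceEq, reduceIte, Matrix.cons_val]
  linear_combination (0:ℂ) * hu + ((8:ℂ) * (p 3:ℂ)^2 * (ρ:ℂ)^2 * (v:ℂ) * (((sdenom ρ p : ℝ):ℂ))⁻¹^3 + (-8:ℂ) * (p 2:ℂ)^2 * (ρ:ℂ)^2 * (v:ℂ) * (((sdenom ρ p : ℝ):ℂ))⁻¹^3 + (8:ℂ) * (p 1:ℂ) * (p 2:ℂ) * (ρ:ℂ)^2 * (v:ℂ) * (((sdenom ρ p : ℝ):ℂ))⁻¹^3 * Complex.I + (8:ℂ) * (p 1:ℂ)^2 * (ρ:ℂ)^2 * (v:ℂ) * (((sdenom ρ p : ℝ):ℂ))⁻¹^3 + (8:ℂ) * (p 0:ℂ) * (p 3:ℂ) * (ρ:ℂ)^2 * (v:ℂ) * (((sdenom ρ p : ℝ):ℂ))⁻¹^3 * Complex.I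 + (-8:ℂ) * (p 0:ℂ)^2 * (ρ:ℂ)^2 * (v:ℂ) * (((sdenom ρ p : ℝ):ℂ))⁻¹^3) * Complex.I_mul_I


lemma step1 (ρ v : ℝ) (hρ : ρ ≠ 0) (μ : Fin 4) :
    evM ρ (DcovE AE μ (HE v)) = evM ρ (DE ρ v μ) := by
  fin_cases μ
  · funext p; ext i j
    fin_cases i <;> fin_cases j
    · exact s1_0_0_0 ρ v hρ p
    · exact s1_0_0_1 ρ v hρ p
    · exact s1_0_1_0 ρ v hρ p
    · exact s1_0_1_1 ρ v hρ p
  · funext p; ext i j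
    fin_cases i <;> fin_cases j
    · exact s1_1_0_0 ρ v hρ p
    · exact s1_1_0_1 ρ v hρ p
    · exact s1_1_1_0 ρ v hρ p
    · exact s1_1_1_1 ρ v hρ p
  · funext p; ext i j
    fin_cases i <;> fin_cases j
    · exact s1_2_0_0 ρ v hρ p
    · exact s1_2_0_1 ρ v hρ p
    · exact s1_2_1_0 ρ v hρ p
    · exact s1_2_1_1 ρ v hρ p
  · funext p; ext i j
    fin_cases i <;> fin_cases j
    · exact s1_3_0_0 ρ v hρ p
    · exact s1_3_0_1 ρ v hρ p
    · exact s1_3_1_0 ρ v hρ p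
    · exact s1_3_1_1 ρ v hρ p

end HL
open HL

/-- **Instantons in Partially Broken Gauge Groups**, Appendix B: under the BPST one-instanton
background of size `ρ > 0`, the Higgs field configuration `H` in the rank-two symmetric tensor
representation satisfies the covariant Laplace equation `∑_μ D_μ D_μ H = 0` on `ℝ⁴`. -/
theorem higgs_covariant_laplacian_eq_zero (ρ v : ℝ) (hρ : 0 < ρ) :
    ∀ p : Fin 4 → ℝ, ∑ μ : Fin 4, Dcov (bpst ρ) μ (Dcov (bpst ρ) μ (higgs ρ v)) p = 0 := by
  intro p
  have hρ' : ρ ≠ 0 := ne_of_gt hρ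
  have h1 : ∀ μ : Fin 4, Dcov (bpst ρ) μ (higgs ρ v) = evM ρ (DE ρ v μ) := by
    intro μ
    rw [hH ρ v, Dcov_evM ρ hρ' AE (hA ρ) μ (HE v), step1 ρ v hρ' μ]
  have h2 : ∀ μ : Fin 4, Dcov (bpst ρ) μ (Dcov (bpst ρ) μ (higgs ρ v))
      = evM ρ (DcovE AE μ (DE ρ v μ)) := by
    intro μ
    rw [h1 μ, Dcov_evM ρ hρ' AE (hA ρ) μ (DE ρ v μ)]
  simp only [h2]
  rw [Fin.sum_univ_four]
  ext i j
  simp only [Matrix.add_apply, Matrix.zero_apply]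
  fin_cases i <;> fin_cases j
  · exact fl_0_0 ρ v hρ' p
  · exact fl_0_1 ρ v hρ' p
  · exact fl_1_0 ρ v hρ' p
  · exact fl_1_1 ρ v hρ' p
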